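/- If a self-adjoint element x in a C*-probability space (A,τ) has moments τ(x^k) = C_k (the Catalan numbers) for all k ≥ 0, then the spectral distribution of x with respect to τ is the free Poisson (Marchenko–Pastur) law of parameter 1, i.e. the measure (1/2π)√(4/t − 1) dt on [0,4]. -/

import Mathlib

open MeasureTheory

/-- The free Poisson (Marchenko–Pastur) law of parameter 1: the measure
`(1/2π)√(4/t − 1) dt` on `[0,4]`. -/
noncomputable def mpLaw : Measure ℝ :=
  (volume.restrict (Set.Icc (0 : ℝ) 4)).withDensity
    (fun t => ENNReal.ofReal ((2 * Real.pi)⁻¹ * Real.sqrt (4 / t - 1)))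

section aux
open Real intervalIntegral
open scoped ENNReal NNReal


lemma gamma_half_complex : Complex.Gamma (1/2) = (Real.sqrt Real.pi : ℂ) := by
  rw [Complex.Gamma_one_half_eq]
  have h : ((1:ℂ)/2) = ((1/2 : ℝ) : ℂ) := by norm_num
  rw [h, ← Complex.ofReal_cpow Real.pi_nonneg, Real.sqrt_eq_rpow]

lemma gamma_nat_half (k : ℕ) :
    Complex.Gamma ((k : ℂ) + 1/2)
      = ((2*k).factorial : ℂ) * (Real.sqrt Real.pi : ℂ) / ((4:ℂ)^k * (k.factorial : ℂ)) := by
  induction k with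
  | zero => simpa using gamma_half_complex
  | succ n ih =>
      have hne : (n : ℂ) + 1/2 ≠ 0 := by
        intro h
        have := congrArg Complex.re h
        simp [Complex.add_re] at this
        nlinarith [Nat.cast_nonneg (α := ℝ) n]
      have hstep : ((n+1 : ℕ) : ℂ) + 1/2 = ((n:ℂ) + 1/2) + 1 := by push_cast; ring
      rw [hstep, Complex.Gamma_add_one _ hne, ih, mul_div_assoc']
      have h2 : (2*(n+1)) = (2*n) + 1 + 1 := by ring
      rw [h2, Nat.factorial_succ, Nat.factorial_succ, Nat.factorial_succ]
      have hb : ((4:ℂ)^n * (n.factorial : ℂ)) ≠ 0 := by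
        refine mul_ne_zero (by norm_num) ?_
        exact_mod_cast n.factorial_ne_zero
      have hd : ((4:ℂ)^(n+1) * (((n+1) * n.factorial : ℕ) : ℂ)) ≠ 0 := by
        refine mul_ne_zero (by norm_num) ?_
        exact_mod_cast Nat.mul_ne_zero (Nat.succ_ne_zero n) n.factorial_ne_zero
      rw [div_eq_div_iff hb hd]
      push_cast
      ring

lemma beta_val (k : ℕ) :
    Complex.betaIntegral ((k:ℂ) + 1/2) (3/2)
      = (Real.pi : ℂ) * ((2*k).factorial : ℂ)
        / (2 * 4^k * (k.factorial : ℂ) * ((k+1).factorial : ℂ)) := by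
  have hs : 0 < Complex.re ((k:ℂ) + 1/2) := by
    simp [Complex.add_re]
    positivity
  have ht : 0 < Complex.re (3/2 : ℂ) := by norm_num
  have key := Complex.Gamma_mul_Gamma_eq_betaIntegral hs ht
  have hsum : ((k:ℂ) + 1/2) + (3/2 : ℂ) = ((k+1 : ℕ) : ℂ) + 1 := by push_cast; ring
  rw [hsum, Complex.Gamma_nat_eq_factorial] at key
  have hf : ∀ n : ℕ, ((n.factorial : ℂ)) ≠ 0 := fun n => by exact_mod_cast n.factorial_ne_zero
  have hB : Complex.betaIntegral ((k:ℂ) + 1/2) (3/2)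
      = Complex.Gamma ((k:ℂ) + 1/2) * Complex.Gamma (3/2) / ((k+1).factorial : ℂ) := by
    rw [eq_div_iff (hf _), key]; ring
  have h32 : (3/2 : ℂ) = ((1:ℕ) : ℂ) + 1/2 := by norm_num
  rw [hB, gamma_nat_half, h32, gamma_nat_half, ← show (Real.sqrt Real.pi : ℂ) * (Real.sqrt Real.pi : ℂ) = (Real.pi : ℂ) from by rw [← Complex.ofReal_mul, Real.mul_self_sqrt Real.pi_nonneg]]
  · field_simp
    ring


lemma J_val (k : ℕ) :
    (∫ t in (0:ℝ)..4, t ^ k * Real.sqrt (4 / t - 1))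
      = 2 * Real.pi * ((2*k).factorial : ℝ) / ((k.factorial : ℝ) * ((k+1).factorial : ℝ)) := by
  have h04 : (0:ℝ) ≤ 4 := by norm_num
  have stepA : (∫ t in (0:ℝ)..4, t ^ k * Real.sqrt (4 / t - 1))
      = ∫ t in (0:ℝ)..4, t ^ ((k:ℝ) - 1/2) * (4 - t) ^ ((1:ℝ)/2) := by
    rw [integral_of_le h04, integral_of_le h04]
    refine setIntegral_congr_fun measurableSet_Ioc (fun t ht => ?_)
    obtain ⟨ht0, ht4⟩ := ht
    have h1 : 4 / t - 1 = (4 - t) / t := by field_simp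
    have h2 : Real.sqrt ((4 - t)/t) = Real.sqrt (4 - t) / Real.sqrt t :=
      Real.sqrt_div (by linarith) t
    rw [h1, h2, Real.sqrt_eq_rpow, Real.sqrt_eq_rpow, ← Real.rpow_natCast t k,
      Real.rpow_sub ht0]
    ring
  rw [stepA]
  have hC : (∫ t in (0:ℝ)..4, (t:ℂ) ^ (((k:ℂ) + 1/2) - 1) * (((4:ℝ):ℂ) - t) ^ ((3/2 : ℂ) - 1))
      = ((∫ t in (0:ℝ)..4, t ^ ((k:ℝ) - 1/2) * (4 - t) ^ ((1:ℝ)/2) : ℝ) : ℂ) := by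
    rw [← intervalIntegral.integral_ofReal
      (f := fun t => t ^ ((k:ℝ) - 1/2) * (4 - t) ^ ((1:ℝ)/2))]
    rw [integral_of_le h04, integral_of_le h04]
    refine setIntegral_congr_fun measurableSet_Ioc (fun t ht => ?_)
    obtain ⟨ht0, ht4⟩ := ht
    rw [Complex.ofReal_mul, Complex.ofReal_cpow ht0.le, Complex.ofReal_cpow (by linarith)]
    push_cast
    rw [show ((k:ℂ) + 1/2 - 1) = (k:ℂ) - 1/2 from by ring]
    norm_num
  have scaled := Complex.betaIntegral_scaled ((k:ℂ) + 1/2) (3/2) (show (0:ℝ) < 4 by norm_num)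
  rw [scaled] at hC
  have hpow : ((4:ℝ):ℂ) ^ (((k:ℂ) + 1/2) + (3/2 : ℂ) - 1) = (((4:ℝ)^(k+1) : ℝ) : ℂ) := by
    have h : (((k:ℂ) + 1/2) + (3/2 : ℂ) - 1) = ((k+1 : ℕ) : ℂ) := by push_cast; ring
    rw [h, Complex.cpow_natCast]
    push_cast
    ring
  rw [hpow, beta_val] at hC
  have final : (((4:ℝ)^(k+1) : ℝ) : ℂ) * ((Real.pi : ℂ) * ((2*k).factorial : ℂ)
        / (2 * 4^k * (k.factorial : ℂ) * ((k+1).factorial : ℂ)))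
      = ((2 * Real.pi * ((2*k).factorial : ℝ) / ((k.factorial : ℝ) * ((k+1).factorial : ℝ)) : ℝ) : ℂ) := by
    have hf : ∀ n : ℕ, ((n.factorial : ℂ)) ≠ 0 := fun n => by exact_mod_cast n.factorial_ne_zero
    have h4 : ((4:ℂ)^k) ≠ 0 := by norm_num
    push_cast
    have hrw : (4:ℂ)^(k+1) * ((Real.pi:ℂ) * ((2*k).factorial:ℂ) / (2 * 4^k * (k.factorial:ℂ) * ((k+1).factorial:ℂ)))
        = ((4:ℂ)^(k+1) * (Real.pi:ℂ) * ((2*k).factorial:ℂ)) / (2 * 4^k * (k.factorial:ℂ) * ((k+1).factorial:ℂ)) := by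
      ring
    rw [hrw,
      div_eq_div_iff
      (mul_ne_zero (mul_ne_zero (mul_ne_zero two_ne_zero h4) (hf k)) (hf (k+1)))
      (mul_ne_zero (hf k) (hf (k+1)))]
    ring
  rw [final] at hC
  exact_mod_cast hC.symm

lemma meas_kernel (k : ℕ) : Measurable (fun t : ℝ => t ^ k * Real.sqrt (4 / t - 1)) := by
  exact (measurable_id.pow_const k).mul
    (((measurable_const.div measurable_id).sub measurable_const).sqrt)

lemma integrableOn_kernel (k : ℕ) :
    IntegrableOn (fun t : ℝ => t ^ k * Real.sqrt (4 / t - 1)) (Set.Ioc 0 4) volume := by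
  have hg : IntegrableOn (fun t : ℝ => 4^k * (2 * t ^ (-(1/2) : ℝ))) (Set.Ioc 0 4) volume := by
    have := (intervalIntegral.intervalIntegrable_rpow' (a := 0) (b := 4) (r := -(1/2))
      (by norm_num)).1
    exact (this.const_mul 2).const_mul (4^k)
  refine Integrable.mono' hg ((meas_kernel k).aestronglyMeasurable) ?_
  rw [ae_restrict_iff' measurableSet_Ioc]
  refine Filter.Eventually.of_forall (fun t ht => ?_)
  obtain ⟨ht0, ht4⟩ := ht
  have h1 : Real.sqrt (4 / t - 1) ≤ Real.sqrt (4 / t) :=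
    Real.sqrt_le_sqrt (by linarith)
  have h2 : Real.sqrt (4 / t) = 2 * t ^ (-(1/2) : ℝ) := by
    rw [Real.sqrt_div (by norm_num) t, Real.rpow_neg ht0.le, ← Real.sqrt_eq_rpow]
    rw [show (4:ℝ) = 2^2 by norm_num, Real.sqrt_sq (by norm_num : (0:ℝ) ≤ 2)]
    rw [div_eq_mul_inv]
  have h3 : t ^ k ≤ 4 ^ k := pow_le_pow_left₀ ht0.le ht4 k
  have h4 : (0:ℝ) ≤ t ^ k := pow_nonneg ht0.le k
  rw [Real.norm_eq_abs, abs_of_nonneg (by positivity)]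
  calc t ^ k * Real.sqrt (4 / t - 1) ≤ 4 ^ k * Real.sqrt (4 / t) := by
        exact mul_le_mul h3 h1 (Real.sqrt_nonneg _) (by positivity)
    _ = 4 ^ k * (2 * t ^ (-(1/2) : ℝ)) := by rw [h2]

lemma mp_setIntegral (k : ℕ) :
    (∫ t in Set.Icc (0:ℝ) 4, ((2 * Real.pi)⁻¹ * Real.sqrt (4 / t - 1)) * t ^ k)
      = ((2*k).choose k : ℝ) / (k+1) := by
  rw [MeasureTheory.integral_Icc_eq_integral_Ioc,
    ← intervalIntegral.integral_of_le (by norm_num : (0:ℝ) ≤ 4)]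
  have : (∫ t in (0:ℝ)..4, ((2 * Real.pi)⁻¹ * Real.sqrt (4 / t - 1)) * t ^ k)
      = (2 * Real.pi)⁻¹ * ∫ t in (0:ℝ)..4, t ^ k * Real.sqrt (4 / t - 1) := by
    rw [← intervalIntegral.integral_const_mul]
    congr 1
    funext t
    ring
  rw [this, J_val]
  have hccn : (2*k).factorial = (2*k).choose k * (k.factorial * k.factorial) := by
    have h := Nat.choose_mul_factorial_mul_factorial (show k ≤ 2*k by omega)
    rw [show 2*k - k = k by omega] at h
    rw [← h]; ring
  have hcc : ((2*k).factorial : ℝ) = (2*k).choose k * ((k.factorial : ℝ) * k.factorial) := by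
    exact_mod_cast congrArg (Nat.cast (R := ℝ)) hccn
  rw [hcc, Nat.factorial_succ]
  have hπ : (2 * Real.pi) ≠ 0 := by positivity
  have hf : (k.factorial : ℝ) ≠ 0 := by exact_mod_cast k.factorial_ne_zero
  have hk1 : ((k:ℝ) + 1) ≠ 0 := by positivity
  push_cast
  field_simp

lemma mp_moment (k : ℕ) :
    (∫ t, t ^ k ∂mpLaw) = ((2*k).choose k : ℝ) / (k+1) := by
  have hd : Measurable (fun t : ℝ => ((2 * Real.pi)⁻¹ * Real.sqrt (4 / t - 1)).toNNReal) :=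
    (measurable_const.mul
      (((measurable_const.div measurable_id).sub measurable_const).sqrt)).real_toNNReal
  have h0 : (∫ t, t ^ k ∂mpLaw)
      = ∫ t in Set.Icc (0:ℝ) 4, ((2 * Real.pi)⁻¹ * Real.sqrt (4 / t - 1)) * t ^ k := by
    rw [show mpLaw = (volume.restrict (Set.Icc (0 : ℝ) 4)).withDensity
        (fun t => (((2 * Real.pi)⁻¹ * Real.sqrt (4 / t - 1)).toNNReal : ℝ≥0∞)) from rfl,
      integral_withDensity_eq_integral_smul hd]
    refine integral_congr_ae (Filter.Eventually.of_forall (fun t => ?_))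
    simp only [NNReal.smul_def, smul_eq_mul]
    rw [Real.coe_toNNReal _ (by positivity)]
  rw [h0, mp_setIntegral]

lemma mp_integrable :
    Integrable (fun t : ℝ => (2 * Real.pi)⁻¹ * Real.sqrt (4 / t - 1))
      (volume.restrict (Set.Icc (0:ℝ) 4)) := by
  have h : (fun t : ℝ => (2 * Real.pi)⁻¹ * Real.sqrt (4 / t - 1))
      = (fun t : ℝ => (2 * Real.pi)⁻¹ * (t ^ 0 * Real.sqrt (4 / t - 1))) := by
    funext t; simp
  rw [h]
  have : IntegrableOn (fun t : ℝ => (2 * Real.pi)⁻¹ * (t ^ 0 * Real.sqrt (4 / t - 1)))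
      (Set.Icc (0:ℝ) 4) volume := by
    rw [integrableOn_Icc_iff_integrableOn_Ioc]
    exact (integrableOn_kernel 0).const_mul _
  exact this

instance mp_prob : IsProbabilityMeasure mpLaw := by
  constructor
  rw [show mpLaw = (volume.restrict (Set.Icc (0 : ℝ) 4)).withDensity
      (fun t => ENNReal.ofReal ((2 * Real.pi)⁻¹ * Real.sqrt (4 / t - 1))) from rfl,
    withDensity_apply _ MeasurableSet.univ, Measure.restrict_univ,
    ← ofReal_integral_eq_lintegral_ofReal mp_integrable
      (Filter.Eventually.of_forall (fun t => by positivity))]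
  have h := mp_setIntegral 0
  simp only [pow_zero, mul_one] at h
  rw [h]
  norm_num

lemma measure_eq_of_moments (μ ν : Measure ℝ) [IsProbabilityMeasure μ] [IsProbabilityMeasure ν]
    (a b : ℝ) (hμr : μ.restrict (Set.Icc a b) = μ) (hνr : ν.restrict (Set.Icc a b) = ν)
    (hmom : ∀ k : ℕ, (∫ t, t ^ k ∂μ) = ∫ t, t ^ k ∂ν) : μ = ν := by
  -- integrability of continuous functions
  have hint : ∀ (ρ : Measure ℝ), IsProbabilityMeasure ρ → ρ.restrict (Set.Icc a b) = ρ →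
      ∀ f : ℝ → ℝ, Continuous f → Integrable f ρ := by
    intro ρ hρprob hρr f hf
    rw [← hρr]
    exact hf.continuousOn.integrableOn_compact isCompact_Icc
  -- polynomials have equal integrals
  have hpoly : ∀ p : Polynomial ℝ, (∫ t, p.eval t ∂μ) = ∫ t, p.eval t ∂ν := by
    intro p
    have hμi : ∀ i : ℕ, Integrable (fun t : ℝ => p.coeff i * t ^ i) μ := fun i =>
      (hint μ inferInstance hμr _ (continuous_pow i)).const_mul _
    have hνi : ∀ i : ℕ, Integrable (fun t : ℝ => p.coeff i * t ^ i) ν := fun i =>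
      (hint ν inferInstance hνr _ (continuous_pow i)).const_mul _
    have h1 : (∫ t, p.eval t ∂μ)
        = ∑ i ∈ Finset.range (p.natDegree + 1), ∫ t, p.coeff i * t ^ i ∂μ := by
      rw [← integral_finset_sum _ (fun i _ => hμi i)]
      refine integral_congr_ae (Filter.Eventually.of_forall (fun t => ?_))
      exact Polynomial.eval_eq_sum_range t
    have h2 : (∫ t, p.eval t ∂ν)
        = ∑ i ∈ Finset.range (p.natDegree + 1), ∫ t, p.coeff i * t ^ i ∂ν := by
      rw [← integral_finset_sum _ (fun i _ => hνi i)]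
      refine integral_congr_ae (Filter.Eventually.of_forall (fun t => ?_))
      exact Polynomial.eval_eq_sum_range t
    rw [h1, h2]
    refine Finset.sum_congr rfl (fun i _ => ?_)
    rw [MeasureTheory.integral_const_mul, MeasureTheory.integral_const_mul, hmom i]
  -- continuous functions have equal integrals
  have key : ∀ f : ℝ → ℝ, Continuous f → (∫ t, f t ∂μ) = ∫ t, f t ∂ν := by
    intro f hf
    have hbound : ∀ ε : ℝ, 0 < ε → |(∫ t, f t ∂μ) - ∫ t, f t ∂ν| ≤ 2 * ε := by
      intro ε hε
      -- Weierstrass approximation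
      have hmem : (ContinuousMap.restrict (Set.Icc a b) ⟨f, hf⟩ : C(Set.Icc a b, ℝ))
          ∈ (polynomialFunctions (Set.Icc a b)).topologicalClosure := by
        rw [polynomialFunctions_closure_eq_top]
        trivial
      have hmem' : (ContinuousMap.restrict (Set.Icc a b) ⟨f, hf⟩ : C(Set.Icc a b, ℝ))
          ∈ closure ((polynomialFunctions (Set.Icc a b) : Set C(Set.Icc a b, ℝ))) := hmem
      obtain ⟨g, hgmem, hgdist⟩ := Metric.mem_closure_iff.mp hmem' ε hε
      rw [polynomialFunctions_coe] at hgmem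
      obtain ⟨p, hp⟩ := hgmem
      subst hp
      have hpt : ∀ t, t ∈ Set.Icc a b → |f t - Polynomial.eval t p| ≤ ε := by
        intro t ht
        have h1 := ContinuousMap.dist_apply_le_dist
          (f := (ContinuousMap.restrict (Set.Icc a b) ⟨f, hf⟩ : C(Set.Icc a b, ℝ)))
          (g := (Polynomial.toContinuousMapOnAlgHom (Set.Icc a b)) p) ⟨t, ht⟩
        have h2 : dist ((ContinuousMap.restrict (Set.Icc a b) ⟨f, hf⟩ : C(Set.Icc a b, ℝ)) ⟨t, ht⟩)
            (((Polynomial.toContinuousMapOnAlgHom (Set.Icc a b)) p) ⟨t, ht⟩)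
            = |f t - Polynomial.eval t p| := by
          rw [Real.dist_eq]
          rfl
        rw [h2] at h1
        exact h1.trans hgdist.le
      have hib : ∀ (ρ : Measure ℝ) (hρ : IsProbabilityMeasure ρ), ρ.restrict (Set.Icc a b) = ρ →
          |(∫ t, f t ∂ρ) - ∫ t, Polynomial.eval t p ∂ρ| ≤ ε := by
        intro ρ hρ hρr
        rw [← integral_sub (hint ρ hρ hρr f hf) (hint ρ hρ hρr _ (Polynomial.continuous p))]
        have hae : ∀ᵐ x ∂ρ, ‖f x - Polynomial.eval x p‖ ≤ ε := by
          rw [← hρr, ae_restrict_iff' measurableSet_Icc]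
          exact Filter.Eventually.of_forall (fun t ht => by
            rw [Real.norm_eq_abs]; exact hpt t ht)
        have h3 := norm_integral_le_of_norm_le_const (μ := ρ) hae
        rw [Real.norm_eq_abs] at h3
        simpa [measure_univ] using h3
      have hμb := hib μ inferInstance hμr
      have hνb := hib ν inferInstance hνr
      have hpeq := hpoly p
      have hsplit : (∫ t, f t ∂μ) - ∫ t, f t ∂ν
          = ((∫ t, f t ∂μ) - ∫ t, Polynomial.eval t p ∂μ)
            + ((∫ t, Polynomial.eval t p ∂ν) - ∫ t, f t ∂ν) := by
        rw [hpeq]; ring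
      rw [hsplit]
      refine le_trans (abs_add_le _ _) ?_
      have h4 := abs_sub_comm (∫ t, f t ∂ν) (∫ t, Polynomial.eval t p ∂ν)
      linarith
    have h0 : |(∫ t, f t ∂μ) - ∫ t, f t ∂ν| ≤ 0 := by
      by_contra hcon
      push_neg at hcon
      have := hbound (|(∫ t, f t ∂μ) - ∫ t, f t ∂ν| / 4) (by linarith)
      linarith
    have := abs_nonneg ((∫ t, f t ∂μ) - ∫ t, f t ∂ν)
    have : |(∫ t, f t ∂μ) - ∫ t, f t ∂ν| = 0 := le_antisymm h0 this
    linarith [abs_eq_zero.mp this, sub_eq_zero.mp (abs_eq_zero.mp this)]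
  -- conclude via bounded continuous functions
  refine ext_of_forall_lintegral_eq_of_IsFiniteMeasure (fun f => ?_)
  have hcont : Continuous (fun x : ℝ => ((f x : ℝ≥0) : ℝ)) :=
    NNReal.continuous_coe.comp f.continuous
  rw [lintegral_coe_eq_integral _ (hint μ inferInstance hμr _ hcont),
    lintegral_coe_eq_integral _ (hint ν inferInstance hνr _ hcont),
    key _ hcont]

end aux

/-- If a self-adjoint element `x` of a C*-probability space `(A,τ)` has moments
`τ(x^k) = C_k` (the Catalan numbers), then its spectral distribution — the unique
Borel probability measure `μ` on the spectrum of `x` with `τ(x^k) = ∫ t^k dμ` —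
is the free Poisson law of parameter 1. -/
theorem spectral_distribution_eq_mpLaw
    {A : Type*} [NormedRing A] [StarRing A] [CStarRing A] [CompleteSpace A]
    [NormedAlgebra ℂ A] [NormedAlgebra ℝ A] [IsScalarTower ℝ ℂ A]
    (τ : A →ₗ[ℂ] ℂ) (hτ1 : τ 1 = 1)
    (hpos : ∀ a, 0 ≤ (τ (star a * a)).re ∧ (τ (star a * a)).im = 0)
    (hfaith : ∀ a, τ (star a * a) = 0 → a = 0)
    (x : A) (hx : IsSelfAdjoint x)
    (hmom : ∀ k : ℕ, τ (x ^ k) = ((2 * k).choose k : ℂ) / (k + 1))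
    (μ : MeasureTheory.Measure ℝ) [MeasureTheory.IsProbabilityMeasure μ]
    (hsupp : μ (spectrum ℝ x)ᶜ = 0)
    (hμmom : ∀ k : ℕ, τ (x ^ k) = ((∫ t, t ^ k ∂μ : ℝ) : ℂ)) :
    μ = mpLaw := by
  -- real moments of μ
  have hreal : ∀ k : ℕ, (∫ t, t ^ k ∂μ) = ((2 * k).choose k : ℝ) / (k + 1) := by
    intro k
    have h1 : ((∫ t, t ^ k ∂μ : ℝ) : ℂ) = ((2 * k).choose k : ℂ) / (k + 1) :=
      (hμmom k).symm.trans (hmom k)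
    have h2 : ((2 * k).choose k : ℂ) / (k + 1)
        = (((2 * k).choose k : ℝ) / (k + 1) : ℝ) := by push_cast; ring
    rw [h2] at h1
    exact_mod_cast h1
  -- the compact interval
  set M : ℝ := ‖x‖ * ‖(1 : A)‖ with hM
  have hM0 : 0 ≤ M := mul_nonneg (norm_nonneg _) (norm_nonneg _)
  set a : ℝ := -M with ha
  set b : ℝ := max M 4 with hb
  have hIcc04 : Set.Icc (0:ℝ) 4 ⊆ Set.Icc a b := by
    apply Set.Icc_subset_Icc
    · simp [ha]; linarith
    · simp [hb]
  have hspec : spectrum ℝ x ⊆ Set.Icc a b := by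
    refine subset_trans (spectrum.subset_closedBall_norm_mul x) ?_
    rw [Real.closedBall_eq_Icc]
    apply Set.Icc_subset_Icc
    · simp [ha, hM]
    · simp [hb, hM]
  -- μ is supported on [a,b]
  have hμr : μ.restrict (Set.Icc a b) = μ := by
    apply Measure.restrict_eq_self_of_ae_mem
    have h1 : spectrum ℝ x ∈ ae μ := mem_ae_iff.mpr hsupp
    exact Filter.mem_of_superset h1 hspec
  -- mpLaw is supported on [a,b]
  have hνr : mpLaw.restrict (Set.Icc a b) = mpLaw := by
    apply Measure.restrict_eq_self_of_ae_mem
    apply mem_ae_iff.mpr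
    show mpLaw (Set.Icc a b)ᶜ = 0
    have hempty : (Set.Icc a b)ᶜ ∩ Set.Icc (0:ℝ) 4 = ∅ := by
      rw [Set.eq_empty_iff_forall_notMem]
      rintro t ⟨h1, h2⟩
      exact h1 (hIcc04 h2)
    rw [show mpLaw = (volume.restrict (Set.Icc (0 : ℝ) 4)).withDensity
        (fun t => ENNReal.ofReal ((2 * Real.pi)⁻¹ * Real.sqrt (4 / t - 1))) from rfl,
      withDensity_apply _ measurableSet_Icc.compl,
      Measure.restrict_restrict measurableSet_Icc.compl, hempty,
      Measure.restrict_empty, lintegral_zero_measure]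
  -- conclude by uniqueness of moments
  refine measure_eq_of_moments μ mpLaw a b hμr hνr (fun k => ?_)
  rw [hreal k, mp_moment k]
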